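/- For an extended affine permutation w arising from a finite permutation (w(i) ∈ {1,…,n} for 1 ≤ i ≤ n, extended by w(i+n) = w(i)+n), the matrix of w is block diagonal with n×n blocks, and w has a unique proper numbering up to an overall additive shift; this numbering restricted to the block {1,…,n} × {1,…,n} coincides (up to shift) with the Matrix-Ball Construction numbering: d(b) = 1 + (length of the longest path of balls strictly northwest of b within the same block ending at b, counted appropriately), i.e. d((i,w(i)) + k(n,n)) = d_MBC(i, w(i)) + k·m where m is the width of the Shi poset. -/

import Mathlib

/-- The Shi relation `i ≤_S j` for an extended affine permutation `w`. -/
def ShiLe (n : ℕ) (w : ℤ → ℤ) (i j : ℤ) : Prop :=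
  i = j ∨ (j < i ∧ w i < w j) ∨ w i + n < w j

/-- An antichain of the Shi poset of `w` on `{1,…,n}`. -/
def IsShiAntichain (n : ℕ) (w : ℤ → ℤ) (A : Finset ℤ) : Prop :=
  A ⊆ Finset.Icc (1 : ℤ) n ∧
  ∀ i ∈ A, ∀ j ∈ A, i ≠ j → ¬ ShiLe n w i j ∧ ¬ ShiLe n w j i

/-- `m` is the width (maximal antichain size) of the Shi poset of `w`. -/
def IsShiWidth (n : ℕ) (w : ℤ → ℤ) (m : ℕ) : Prop :=
  (∃ A : Finset ℤ, IsShiAntichain n w A ∧ A.card = m) ∧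
  ∀ A : Finset ℤ, IsShiAntichain n w A → A.card ≤ m

/-- A proper numbering of the balls `(i, w i)` of `w`, indexed by rows: monotone
(strictly northwest implies strictly smaller) and continuous (some ball weakly
northwest is numbered one less). -/
def IsProper (w d : ℤ → ℤ) : Prop :=
  (∀ i j : ℤ, i < j → w i < w j → d i < d j) ∧
  (∀ j : ℤ, ∃ i : ℤ, i ≤ j ∧ w i ≤ w j ∧ d i = d j - 1)

/-- An `(n,n)`-invariant southeast chain of balls of `w` (identified by rows). -/
def IsChannelChain (n : ℕ) (w : ℤ → ℤ) (C : Set ℤ) : Prop :=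
  (∀ i : ℤ, i ∈ C ↔ i + n ∈ C) ∧ ∀ i ∈ C, ∀ j ∈ C, i < j → w i < w j

/-- The density of such a chain: number of `(n,n)`-translate classes. -/
noncomputable def chDensity (n : ℕ) (C : Set ℤ) : ℕ := (C ∩ Set.Icc (1 : ℤ) n).ncard

/-- A channel: an `(n,n)`-invariant southeast chain of maximal density. -/
def IsChannel (n : ℕ) (w : ℤ → ℤ) (C : Set ℤ) : Prop :=
  IsChannelChain n w C ∧
  ∀ D : Set ℤ, IsChannelChain n w D → chDensity n D ≤ chDensity n C

/-- `C₁` is southwest of `C₂`: every element of `C₁` has an element of `C₂`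
weakly northeast of it. -/
def ChannelSW (n : ℕ) (w : ℤ → ℤ) (C₁ C₂ : Set ℤ) : Prop :=
  ∀ i ∈ C₁, ∃ j ∈ C₂, j ≤ i ∧ w i ≤ w j

theorem stmt18 (n : ℕ) (hn : 0 < n) (w : ℤ → ℤ)
    (hbij : Function.Bijective w) (hper : ∀ i : ℤ, w (i + n) = w i + n)
    -- `w` arises from a finite permutation of `{1,…,n}`
    (hfin : ∀ i ∈ Finset.Icc (1 : ℤ) n, w i ∈ Finset.Icc (1 : ℤ) n)
    (m : ℕ) (hm : IsShiWidth n w m)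
    -- the MBC numbering of the finite block: `dMBC i` is the greatest
    -- `K + 1` over strictly-northwest chains inside the block ending at `i`
    (dMBC : ℤ → ℤ)
    (hMBC : ∀ i ∈ Finset.Icc (1 : ℤ) n,
      IsGreatest {v : ℤ | ∃ (K : ℕ) (q : ℕ → ℤ), v = (K : ℤ) + 1 ∧ q K = i ∧
        (∀ l ≤ K, q l ∈ Finset.Icc (1 : ℤ) n) ∧
        ∀ l, l < K → q l < q (l + 1) ∧ w (q l) < w (q (l + 1))} (dMBC i)) :
    -- uniqueness of the proper numbering up to an overall additive shift
    (∀ d d' : ℤ → ℤ, IsProper w d → IsProper w d' → ∃ c : ℤ, ∀ i : ℤ, d' i = d i + c) ∧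
    -- the semi-periodic extension of the MBC numbering is a proper numbering
    ∃ d : ℤ → ℤ, IsProper w d ∧
      ∀ i ∈ Finset.Icc (1 : ℤ) n, ∀ k : ℤ, d (i + k * n) = dMBC i + k * m := by
    classical
  -- basic periodicity
  have winj := hbij.injective
  have hper' : ∀ (i k : ℤ), w (i + k * n) = w i + k * n := by
    intro i k
    induction k using Int.induction_on with
    | zero => simp
    | succ k ih =>
      have h1 : i + ((k : ℤ) + 1) * n = (i + k * n) + n := by ring
      rw [h1, hper, ih]; ring
    | pred k ih =>
      have h2 := hper (i + (-(k : ℤ) - 1) * n)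
      have h1 : (i + (-(k : ℤ) - 1) * n) + n = i + (-(k : ℤ)) * n := by ring
      rw [h1] at h2
      rw [ih] at h2
      linarith
  -- decomposition into block coordinates
  have hdecomp : ∀ j : ℤ, ∃ i0 k : ℤ, i0 ∈ Finset.Icc (1 : ℤ) n ∧ j = i0 + k * n := by
    intro j
    refine ⟨(j - 1) % n + 1, (j - 1) / n, ?_, ?_⟩
    · have h0 : 0 ≤ (j - 1) % n := Int.emod_nonneg _ (by exact_mod_cast hn.ne')
      have h1 : (j - 1) % n < n := Int.emod_lt_of_pos _ (by exact_mod_cast hn)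
      rw [Finset.mem_Icc]; omega
    · have h := Int.mul_ediv_add_emod (j - 1) n
      have h2 : ((j - 1) / n) * (n : ℤ) = (n : ℤ) * ((j - 1) / n) := mul_comm _ _
      linarith
  -- MBC basic facts
  have hd1 : ∀ i ∈ Finset.Icc (1 : ℤ) n, 1 ≤ dMBC i := by
    intro i hi
    obtain ⟨K, q, hv, -, -, -⟩ := (hMBC i hi).1
    omega
  have hstep : ∀ i ∈ Finset.Icc (1 : ℤ) n, ∀ j ∈ Finset.Icc (1 : ℤ) n,
      i < j → w i < w j → dMBC i + 1 ≤ dMBC j := by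
    intro i hi j hj hij hwij
    obtain ⟨K, q, hv, hqK, hqmem, hqch⟩ := (hMBC i hi).1
    refine (hMBC j hj).2 ⟨K + 1, fun l => if l ≤ K then q l else j, by push_cast; omega,
      by beta_reduce; rw [if_neg (by omega)], ?_, ?_⟩
    · intro l hl
      beta_reduce
      by_cases h : l ≤ K
      · rw [if_pos h]; exact hqmem l h
      · rw [if_neg h]; exact hj
    · intro l hl
      beta_reduce
      rcases Nat.lt_or_ge l K with h | h
      · rw [if_pos (by omega : l ≤ K), if_pos (by omega : l + 1 ≤ K)]
        exact hqch l h
      · have hlK : l = K := by omega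
        subst hlK
        rw [if_pos (le_refl l), if_neg (by omega), hqK]
        exact ⟨hij, hwij⟩
  -- chains are strictly increasing in both coordinates, globally
  have hchain2 : ∀ (K : ℕ) (q : ℕ → ℤ),
      (∀ l, l < K → q l < q (l + 1) ∧ w (q l) < w (q (l + 1))) →
      ∀ b, b ≤ K → ∀ a, a < b → q a < q b ∧ w (q a) < w (q b) := by
    intro K q hq b
    induction b with
    | zero => intro _ a ha; omega
    | succ b ih =>
      intro hbK a hab
      rcases Nat.lt_or_ge a b with h | h
      · obtain ⟨h1, h2⟩ := ih (by omega) a h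
        obtain ⟨h3, h4⟩ := hq b (by omega)
        exact ⟨h1.trans h3, h2.trans h4⟩
      · have hab' : a = b := by omega
        subst hab'
        exact hq a (by omega)
  -- MBC numbers are at most m
  have hdm : ∀ i ∈ Finset.Icc (1 : ℤ) n, dMBC i ≤ m := by
    intro i hi
    obtain ⟨K, q, hv, hqK, hqmem, hqch⟩ := (hMBC i hi).1
    have hinj : Set.InjOn q (Finset.range (K + 1)) := by
      intro a ha b hb hab
      simp only [Finset.coe_range, Set.mem_Iio] at ha hb
      by_contra hne
      rcases Nat.lt_or_ge a b with h | h
      · exact absurd hab (ne_of_lt (hchain2 K q hqch b (by omega) a h).1)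
      · exact absurd hab.symm (ne_of_lt (hchain2 K q hqch a (by omega) b (by omega)).1)
    have hcard : ((Finset.range (K + 1)).image q).card = K + 1 := by
      rw [Finset.card_image_of_injOn hinj, Finset.card_range]
    have hanti : IsShiAntichain n w ((Finset.range (K + 1)).image q) := by
      constructor
      · intro x hx
        simp only [Finset.mem_image, Finset.mem_range] at hx
        obtain ⟨l, hl, rfl⟩ := hx
        exact hqmem l (by omega)
      · intro x hx y hy hxy
        simp only [Finset.mem_image, Finset.mem_range] at hx hy
        obtain ⟨a, ha, rfl⟩ := hx
        obtain ⟨b, hb, rfl⟩ := hy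
        have key : ∀ a b : ℕ, a < b → b ≤ K →
            ¬ ShiLe n w (q a) (q b) ∧ ¬ ShiLe n w (q b) (q a) := by
          intro a b h1 h2
          obtain ⟨h3, h4⟩ := hchain2 K q hqch b h2 a h1
          have hqa := hfin _ (hqmem a (by omega))
          have hqb := hfin _ (hqmem b h2)
          rw [Finset.mem_Icc] at hqa hqb
          constructor
          · intro hS; unfold ShiLe at hS
            rcases hS with h | ⟨h5, h6⟩ | h5 <;> omega
          · intro hS; unfold ShiLe at hS
            rcases hS with h | ⟨h5, h6⟩ | h5 <;> omega
        rcases Nat.lt_or_ge a b with h | h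
        · exact key a b h (by omega)
        · have hba : b < a := by
            rcases Nat.lt_or_ge b a with h' | h'
            · exact h'
            · exact absurd (by rw [show a = b from by omega]) hxy
          exact ⟨(key b a hba (by omega)).2, (key b a hba (by omega)).1⟩
    have hle := hm.2 _ hanti
    rw [hcard] at hle
    omega
  -- m is at least 1
  have hm1 : 1 ≤ m := by
    have hanti : IsShiAntichain n w {1} := by
      constructor
      · intro x hx
        rw [Finset.mem_singleton] at hx
        subst hx
        rw [Finset.mem_Icc]; omega
      · intro i hi j hj hij
        rw [Finset.mem_singleton] at hi hj
        subst hi; subst hj; exact absurd rfl hij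
    have := hm.2 {1} hanti
    simpa using this
  -- from an antichain, its maximum has large MBC number
  have hanti_le : ∀ (c : ℕ) (A : Finset ℤ), A.card = c → IsShiAntichain n w A →
      ∀ hA : A.Nonempty, (c : ℤ) ≤ dMBC (A.max' hA) := by
    intro c
    induction c with
    | zero =>
      intro A hc _ hA
      rw [Finset.card_eq_zero] at hc
      subst hc
      exact absurd hA (by simp)
    | succ c ih =>
      intro A hc hanti hA
      have hxA : A.max' hA ∈ A := A.max'_mem hA
      have hxIcc : A.max' hA ∈ Finset.Icc (1 : ℤ) n := hanti.1 hxA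
      rcases Nat.eq_zero_or_pos c with h0 | hpos
      · subst h0
        have := hd1 _ hxIcc
        push_cast
        omega
      · have hcard' : (A.erase (A.max' hA)).card = c := by
          rw [Finset.card_erase_of_mem hxA, hc]
          omega
        have hA'ne : (A.erase (A.max' hA)).Nonempty := Finset.card_pos.mp (by omega)
        have hanti' : IsShiAntichain n w (A.erase (A.max' hA)) :=
          ⟨(Finset.erase_subset _ _).trans hanti.1,
           fun i hi j hj hij => hanti.2 i (Finset.mem_of_mem_erase hi) j
             (Finset.mem_of_mem_erase hj) hij⟩
        have hyA' : (A.erase (A.max' hA)).max' hA'ne ∈ A.erase (A.max' hA) :=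
          Finset.max'_mem _ _
        have hyA : (A.erase (A.max' hA)).max' hA'ne ∈ A := Finset.mem_of_mem_erase hyA'
        have hyx : (A.erase (A.max' hA)).max' hA'ne ≠ A.max' hA :=
          Finset.ne_of_mem_erase hyA'
        have hylt : (A.erase (A.max' hA)).max' hA'ne < A.max' hA :=
          lt_of_le_of_ne (A.le_max' _ hyA) hyx
        have hw : w ((A.erase (A.max' hA)).max' hA'ne) < w (A.max' hA) := by
          by_contra hcon
          have hne : w ((A.erase (A.max' hA)).max' hA'ne) ≠ w (A.max' hA) :=
            fun h => hyx (winj h)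
          have hlt : w (A.max' hA) < w ((A.erase (A.max' hA)).max' hA'ne) := by omega
          exact (hanti.2 _ hxA _ hyA (Ne.symm hyx)).1 (Or.inr (Or.inl ⟨hylt, hlt⟩))
        have h1 := ih _ hcard' hanti' hA'ne
        have h2 := hstep _ (hanti.1 hyA) _ hxIcc hylt hw
        push_cast
        omega
  -- there is a maximizer of the MBC numbering with value m
  have hmax : ∃ i0 ∈ Finset.Icc (1 : ℤ) n, dMBC i0 = m := by
    obtain ⟨A, hanti, hcard⟩ := hm.1
    have hAne : A.Nonempty := Finset.card_pos.mp (by omega)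
    refine ⟨A.max' hAne, hanti.1 (A.max'_mem hAne), ?_⟩
    have h1 := hanti_le m A hcard hanti hAne
    have h2 := hdm _ (hanti.1 (A.max'_mem hAne))
    omega
  -- predecessor along MBC chains
  have hpred : ∀ j ∈ Finset.Icc (1 : ℤ) n, 2 ≤ dMBC j →
      ∃ i ∈ Finset.Icc (1 : ℤ) n, i < j ∧ w i < w j ∧ dMBC i = dMBC j - 1 := by
    intro j hj h2
    obtain ⟨K, q, hv, hqK, hqmem, hqch⟩ := (hMBC j hj).1
    have hK : 1 ≤ K := by omega
    obtain ⟨K', rfl⟩ : ∃ K'', K = K'' + 1 := ⟨K - 1, by omega⟩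
    have hiIcc : q K' ∈ Finset.Icc (1 : ℤ) n := hqmem K' (by omega)
    have hlt := hqch K' (by omega)
    rw [hqK] at hlt
    have hge : (K' : ℤ) + 1 ≤ dMBC (q K') :=
      (hMBC _ hiIcc).2 ⟨K', q, rfl, rfl, fun l hl => hqmem l (by omega),
        fun l hl => hqch l (by omega)⟩
    have hle := hstep _ hiIcc j hj hlt.1 hlt.2
    exact ⟨q K', hiIcc, hlt.1, hlt.2, by push_cast at hv hge ⊢; omega⟩
  have hIccne : (Finset.Icc (1 : ℤ) n).Nonempty := ⟨1, by rw [Finset.mem_Icc]; omega⟩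
  -- the master lemma: every proper numbering has the explicit block form
  have master : ∀ d : ℤ → ℤ, IsProper w d → ∃ c : ℤ,
      ∀ i0 ∈ Finset.Icc (1 : ℤ) n, ∀ k : ℤ, d (i0 + k * n) = dMBC i0 + k * m + c := by
    intro d hd
    obtain ⟨hmono, hcont⟩ := hd
    have hμex : ∀ k : ℤ, ∃ μk : ℤ, (∀ j0 ∈ Finset.Icc (1 : ℤ) n, μk ≤ d (j0 + k * n)) ∧
        (∃ j0 ∈ Finset.Icc (1 : ℤ) n, d (j0 + k * n) = μk) := by
      intro k
      obtain ⟨j0, hj0, hj0e⟩ := Finset.mem_image.mp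
        (Finset.min'_mem ((Finset.Icc (1 : ℤ) n).image (fun j0 => d (j0 + k * n)))
          (hIccne.image _))
      refine ⟨_, ?_, ⟨j0, hj0, hj0e⟩⟩
      intro j1 hj1
      exact Finset.min'_le _ _ (Finset.mem_image_of_mem _ hj1)
    choose μ μ_le μ_mem using hμex
    have hcross : ∀ (k l : ℤ), k < l → ∀ i0 ∈ Finset.Icc (1 : ℤ) n,
        ∀ j0 ∈ Finset.Icc (1 : ℤ) n, d (i0 + k * n) < d (j0 + l * n) := by
      intro k l hkl i0 hi0 j0 hj0
      have hw1 := hfin i0 hi0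
      have hw2 := hfin j0 hj0
      rw [Finset.mem_Icc] at hi0 hj0 hw1 hw2
      have hkn : (k + 1) * (n : ℤ) ≤ l * n := mul_le_mul_of_nonneg_right (by omega) (by omega)
      apply hmono
      · nlinarith
      · rw [hper', hper']; nlinarith
    have hμlt : ∀ k l : ℤ, k < l → μ k < μ l := by
      intro k l hkl
      obtain ⟨j0, hj0, hj0e⟩ := μ_mem l
      obtain ⟨i0, hi0, hi0e⟩ := μ_mem k
      rw [← hi0e, ← hj0e]
      exact hcross k l hkl i0 hi0 j0 hj0
    have hblock : ∀ (k : ℤ) (j0 : ℤ), j0 ∈ Finset.Icc (1 : ℤ) n →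
        ∀ (i0 k' : ℤ), i0 ∈ Finset.Icc (1 : ℤ) n → i0 + k' * n ≤ j0 + k * n → k' ≤ k := by
      intro k j0 hj0 i0 k' hi0 hle
      rw [Finset.mem_Icc] at hi0 hj0
      by_contra hcon
      have h1 : (k + 1) * (n : ℤ) ≤ k' * n := mul_le_mul_of_nonneg_right (by omega) (by omega)
      nlinarith
    -- lower bound
    have hlow : ∀ (k : ℤ), ∀ j0 ∈ Finset.Icc (1 : ℤ) n,
        μ k + dMBC j0 - 1 ≤ d (j0 + k * n) := by
      intro k j0 hj0
      obtain ⟨K, q, hv, hqK, hqmem, hqch⟩ := (hMBC j0 hj0).1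
      have hind : ∀ l, l ≤ K → μ k + l ≤ d (q l + k * n) := by
        intro l
        induction l with
        | zero => intro _; simpa using μ_le k (q 0) (hqmem 0 (by omega))
        | succ l ih =>
          intro hl
          have h1 := ih (by omega)
          have h2 := hqch l (by omega)
          have h3 : d (q l + k * n) < d (q (l + 1) + k * n) := by
            apply hmono
            · linarith [h2.1]
            · rw [hper', hper']; linarith [h2.2]
          push_cast at h1 ⊢
          omega
      have hK := hind K (le_refl K)
      rw [hqK] at hK
      omega
    -- upper bound
    have hupT : ∀ t : ℕ, ∀ (k : ℤ), ∀ j0 ∈ Finset.Icc (1 : ℤ) n,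
        d (j0 + k * n) = μ k + t → (t : ℤ) + 1 ≤ dMBC j0 := by
      intro t
      induction t with
      | zero => intro k j0 hj0 _; simpa using hd1 j0 hj0
      | succ t ih =>
        intro k j0 hj0 hdj
        obtain ⟨i, hi1, hi2, hi3⟩ := hcont (j0 + k * n)
        obtain ⟨i0, k', hi0, rfl⟩ := hdecomp i
        have hk' : k' ≤ k := hblock k j0 hj0 i0 k' hi0 hi1
        have hk'' : k' = k := by
          by_contra hcon
          obtain ⟨j1, hj1, hj1e⟩ := μ_mem k
          have h4 := hcross k' k (by omega) i0 hi0 j1 hj1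
          rw [hj1e] at h4
          push_cast at hdj
          omega
        subst hk''
        have hii : i0 ≤ j0 := by linarith
        have hww : w i0 ≤ w j0 := by
          rw [hper', hper'] at hi2; linarith
        have hne : i0 ≠ j0 := by
          rintro rfl
          omega
        have hwne : w i0 ≠ w j0 := fun h => hne (winj h)
        have hIH := ih k' i0 hi0 (by push_cast at hdj ⊢; omega)
        have hst := hstep i0 hi0 j0 hj0 (by omega) (by omega)
        push_cast at hIH ⊢
        omega
    have hA : ∀ (k : ℤ), ∀ j0 ∈ Finset.Icc (1 : ℤ) n,
        d (j0 + k * n) = μ k + dMBC j0 - 1 := by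
      intro k j0 hj0
      have h1 := hlow k j0 hj0
      have h2 := μ_le k j0 hj0
      have ht' : d (j0 + k * n) = μ k + ((d (j0 + k * n) - μ k).toNat : ℤ) := by omega
      have h3 := hupT (d (j0 + k * n) - μ k).toNat k j0 hj0 ht'
      omega
    have hB : ∀ k : ℤ, μ (k + 1) = μ k + m := by
      intro k
      obtain ⟨i0, hi0, hi0m⟩ := hmax
      have hge : μ k + m ≤ μ (k + 1) := by
        obtain ⟨j1, hj1, hj1e⟩ := μ_mem (k + 1)
        have h1 := hcross k (k + 1) (by omega) i0 hi0 j1 hj1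
        have h2 := hA k i0 hi0
        rw [hj1e] at h1
        omega
      have hle : μ (k + 1) ≤ μ k + m := by
        obtain ⟨j1, hj1, hj1e⟩ := μ_mem (k + 1)
        obtain ⟨i, hi1, hi2, hi3⟩ := hcont (j1 + (k + 1) * n)
        obtain ⟨i0', k', hi0', rfl⟩ := hdecomp i
        have hk' : k' ≤ k + 1 := hblock (k + 1) j1 hj1 i0' k' hi0' hi1
        have hk'' : k' ≤ k := by
          by_contra hcon
          have hkk : k' = k + 1 := by omega
          subst hkk
          have := μ_le (k + 1) i0' hi0'
          omega
        have h5 := hA k' i0' hi0'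
        have h6 := hdm i0' hi0'
        have h7 : μ k' ≤ μ k := by
          rcases eq_or_lt_of_le hk'' with h | h
          · rw [h]
          · exact le_of_lt (hμlt k' k h)
        omega
      omega
    have hμk : ∀ k : ℤ, μ k = μ 0 + k * m := by
      intro k
      induction k using Int.induction_on with
      | zero => simp
      | succ k ih => rw [hB k, ih]; ring
      | pred k ih =>
        have h := hB (-(k : ℤ) - 1)
        rw [show (-(k : ℤ) - 1) + 1 = -(k : ℤ) by ring, ih] at h
        have hr : (-(k : ℤ) - 1) * m = (-(k : ℤ)) * m - m := by ring
        linarith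
    refine ⟨μ 0 - 1, ?_⟩
    intro i0 hi0 k
    rw [hA k i0 hi0, hμk k]
    ring
  -- the explicit numbering
  obtain ⟨D, hDdef⟩ : ∃ D : ℤ → ℤ, ∀ j : ℤ,
      D j = dMBC ((j - 1) % n + 1) + ((j - 1) / n) * m := ⟨_, fun _ => rfl⟩
  have hDval : ∀ i ∈ Finset.Icc (1 : ℤ) n, ∀ k : ℤ, D (i + k * n) = dMBC i + k * m := by
    intro i hi k
    rw [Finset.mem_Icc] at hi
    have h1 : (i + k * n - 1) % n = i - 1 := by
      rw [show i + k * n - 1 = i - 1 + (n : ℤ) * k by ring, Int.add_mul_emod_self_left]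
      exact Int.emod_eq_of_lt (by omega) (by omega)
    have h2 : (i + k * n - 1) / n = k := by
      rw [show i + k * n - 1 = i - 1 + k * n by ring,
        Int.add_mul_ediv_right _ _ (by omega : (n : ℤ) ≠ 0),
        Int.ediv_eq_zero_of_lt (by omega) (by omega)]
      omega
    rw [hDdef, h1, h2, show i - 1 + 1 = i by ring]
  have hDproper : IsProper w D := by
    constructor
    · intro i j hij hwij
      obtain ⟨i0, k, hi0, rfl⟩ := hdecomp i
      obtain ⟨j0, l, hj0, rfl⟩ := hdecomp j
      rw [hDval i0 hi0 k, hDval j0 hj0 l]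
      have hi0' := hi0; have hj0' := hj0
      rw [Finset.mem_Icc] at hi0' hj0'
      have hkl : k ≤ l := by
        by_contra hcon
        have h1 : (l + 1) * (n : ℤ) ≤ k * n := mul_le_mul_of_nonneg_right (by omega) (by omega)
        nlinarith
      rcases eq_or_lt_of_le hkl with rfl | hkl'
      · have h1 : i0 < j0 := by linarith
        have h2 : w i0 < w j0 := by rw [hper', hper'] at hwij; linarith
        have := hstep i0 hi0 j0 hj0 h1 h2
        linarith
      · have h1 := hdm i0 hi0
        have h2 := hd1 j0 hj0
        have h3 : (k + 1) * (m : ℤ) ≤ l * m := mul_le_mul_of_nonneg_right (by omega) (by omega)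
        nlinarith
    · intro j
      obtain ⟨j0, l, hj0, rfl⟩ := hdecomp j
      rcases le_or_gt 2 (dMBC j0) with h2 | h2
      · obtain ⟨i0, hi0, hlt, hwlt, hval⟩ := hpred j0 hj0 h2
        refine ⟨i0 + l * n, by linarith, ?_, ?_⟩
        · rw [hper', hper']; linarith
        · rw [hDval i0 hi0 l, hDval j0 hj0 l]; linarith
      · obtain ⟨i0, hi0, hi0m⟩ := hmax
        have h1 := hd1 j0 hj0
        have hj0' := hj0; rw [Finset.mem_Icc] at hj0'
        have hi0' := hi0; rw [Finset.mem_Icc] at hi0'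
        have hwj := hfin j0 hj0; rw [Finset.mem_Icc] at hwj
        have hwi := hfin i0 hi0; rw [Finset.mem_Icc] at hwi
        have hrn : (l - 1) * (n : ℤ) = l * n - n := by ring
        have hrm : (l - 1) * (m : ℤ) = l * m - m := by ring
        refine ⟨i0 + (l - 1) * n, by linarith, ?_, ?_⟩
        · rw [hper', hper']; linarith
        · rw [hDval i0 hi0 (l - 1), hDval j0 hj0 l]; linarith
  exact ⟨fun d d' hd hd' => by
      obtain ⟨c, hc⟩ := master d hd
      obtain ⟨c', hc'⟩ := master d' hd'
      refine ⟨c' - c, fun i => ?_⟩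
      obtain ⟨i0, k, hi0, rfl⟩ := hdecomp i
      rw [hc i0 hi0 k, hc' i0 hi0 k]; ring,
    D, hDproper, hDval⟩
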